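/- arXiv:math/0605693 — 4 statements merged into one kernel-verified Lean document; each statement's English description precedes it below -/
import Mathlib

section
/- Let X be a topological space on which two finite groups Z and W act by homeomorphisms with commuting actions. Let X° = {x ∈ X : the stabilizer of x in W is trivial}, let Y = X/W with the quotient topology, and let f : X → Y be the quotient map (which is an open map since W is finite). Fix z ∈ Z and suppose the fixed-point set Y^z = {y ∈ Y : z·y = y} is irreducible, and X is Hausdorff (separated). If there exist w₁, w₂ ∈ W and x₁, x₂ ∈ X° with wᵢ(xᵢ) = z·xᵢ for i = 1, 2, then w₁ and w₂ are conjugate in W. -/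
/-- **General conjugacy theorem** (Theorem `t:abst`).
Let `X` be a Hausdorff topological space with commuting actions of finite groups `Z` and `W`
by homeomorphisms.  Let `Y = X/W` with the quotient topology and `f : X → Y` the quotient map.
If `z ∈ Z` has irreducible fixed-point set in `Y`, and `w₁, w₂ ∈ W`, `x₁, x₂ ∈ X` have trivial
`W`-stabilizers and satisfy `wᵢ • xᵢ = z • xᵢ`, then `w₁` and `w₂` are conjugate in `W`. -/
theorem general_conjugacy_theorem
    {X : Type*} [TopologicalSpace X] [T2Space X]
    {Z W : Type*} [Group Z] [Group W] [Finite Z] [Finite W]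
    [MulAction Z X] [MulAction W X]
    (hZcont : ∀ z : Z, Continuous fun x : X => z • x)
    (hWcont : ∀ w : W, Continuous fun x : X => w • x)
    (hcomm : ∀ (z : Z) (w : W) (x : X), z • (w • x) = w • (z • x))
    (z : Z)
    (hirr : IsIrreducible {y : Quotient (MulAction.orbitRel W X) |
      ∀ x : X, Quotient.mk (MulAction.orbitRel W X) x = y →
        Quotient.mk (MulAction.orbitRel W X) (z • x) = y})
    (w₁ w₂ : W) (x₁ x₂ : X)
    (hx₁ : ∀ w : W, w • x₁ = x₁ → w = 1)
    (hx₂ : ∀ w : W, w • x₂ = x₂ → w = 1)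
    (h₁ : w₁ • x₁ = z • x₁) (h₂ : w₂ • x₂ = z • x₂) :
    IsConj w₁ w₂ := by
  classical
  have : Fintype W := Fintype.ofFinite W
  set f : X → Quotient (MulAction.orbitRel W X) := Quotient.mk (MulAction.orbitRel W X) with hf
  -- characterization of equality in the quotient
  have hmk : ∀ a b : X, f a = f b ↔ ∃ u : W, u • b = a := by
    intro a b
    rw [hf, Quotient.eq]
    exact MulAction.orbitRel_apply.trans MulAction.mem_orbit_iff
  set C : W → Set (Quotient (MulAction.orbitRel W X)) :=
    fun w => f '' {x | w • x = z • x} with hCdef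
  -- each C w is closed
  have hCclosed : ∀ w, IsClosed (C w) := by
    intro w
    have hq : Topology.IsQuotientMap f := isQuotientMap_quot_mk
    rw [← hq.isClosed_preimage]
    have : f ⁻¹' (C w) = ⋃ v : W, (fun x => v • x) ⁻¹' {x | w • x = z • x} := by
      ext x
      simp only [Set.mem_preimage, Set.mem_iUnion, Set.mem_image, Set.mem_setOf_eq, hCdef]
      constructor
      · rintro ⟨c, hc, hfc⟩
        obtain ⟨u, hu⟩ := (hmk x c).mp hfc.symm
        exact ⟨u⁻¹, by rw [← hu, inv_smul_smul]; exact hc⟩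
      · rintro ⟨v, hv⟩
        exact ⟨v • x, hv, (hmk (v • x) x).mpr ⟨v, rfl⟩⟩
    rw [this]
    exact isClosed_iUnion_of_finite fun v =>
      (isClosed_eq (hWcont w) (hZcont z)).preimage (hWcont v)
  -- the fixed-point set is covered by the C w
  set T : Set (Quotient (MulAction.orbitRel W X)) :=
    {y | ∀ x : X, f x = y → f (z • x) = y} with hTdef
  -- key lemma: membership of a trivial-stabilizer point in C w₀ forces conjugacy
  have key : ∀ (w w₀ : W) (x : X), (∀ v : W, v • x = x → v = 1) → w • x = z • x →
      f x ∈ C w₀ → IsConj w w₀ := by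
    intro w w₀ x hx hw hmem
    obtain ⟨x', hx', hfx'⟩ := hmem
    obtain ⟨u, hu⟩ := (hmk x' x).mp hfx'
    have hzx' : w₀ • x' = z • x' := hx'
    have e1 : (u⁻¹ * w₀ * u) • x = w • x := by
      calc (u⁻¹ * w₀ * u) • x = u⁻¹ • (w₀ • x') := by rw [mul_smul, mul_smul, hu]
        _ = u⁻¹ • (z • (u • x)) := by rw [hzx', hu]
        _ = u⁻¹ • (u • (z • x)) := by rw [hcomm]
        _ = w • x := by rw [inv_smul_smul, hw]
    have e2 : (w⁻¹ * (u⁻¹ * w₀ * u)) • x = x := by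
      rw [mul_smul, e1, inv_smul_smul]
    have e3 : w⁻¹ * (u⁻¹ * w₀ * u) = 1 := hx _ e2
    have e4 : w = u⁻¹ * w₀ * u := inv_mul_eq_one.mp e3
    exact isConj_iff.mpr ⟨u, by rw [e4]; group⟩
  -- T is contained in some single C w₀
  obtain ⟨c, hcmem, hsub⟩ := (isIrreducible_iff_sUnion_isClosed.mp hirr)
      (Finset.univ.image C)
      (by
        intro s hs
        obtain ⟨w, -, rfl⟩ := Finset.mem_image.mp hs
        exact hCclosed w)
      (by
        intro y hy
        obtain ⟨x, hx⟩ := Quotient.exists_rep y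
        have : f (z • x) = f x := by rw [hf] at *; rw [hx]; exact hy x hx
        obtain ⟨u, hu⟩ := (hmk (z • x) x).mp this
        refine Set.mem_sUnion.mpr ⟨C u, ?_, ⟨x, hu, by rw [hf] at *; exact hx⟩⟩
        exact Finset.mem_coe.mpr (Finset.mem_image.mpr ⟨u, Finset.mem_univ u, rfl⟩))
  obtain ⟨w₀, -, rfl⟩ := Finset.mem_image.mp hcmem
  -- f x₁ and f x₂ lie in T
  have hmemT : ∀ (w : W) (x : X), w • x = z • x → f x ∈ T := by
    intro w x hw x' hx'
    obtain ⟨u, hu⟩ := (hmk x' x).mp hx'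
    refine (hmk (z • x') x).mpr ⟨u * w, ?_⟩
    rw [mul_smul, hw, ← hu, hcomm z u x]
  have c₁ : IsConj w₁ w₀ := key w₁ w₀ x₁ hx₁ h₁ (hsub (hmemT w₁ x₁ h₁))
  have c₂ : IsConj w₂ w₀ := key w₂ w₀ x₂ hx₂ h₂ (hsub (hmemT w₂ x₂ h₂))
  exact c₁.trans c₂.symm
end

section
/- In the setting of the previous theorem with X, Z, W, f : X → Y = X/W as above, define for w ∈ W and z ∈ Z the set X(w,z) = {x ∈ X : w(x) = z·x}. Then each X(w,z) is closed in X, the preimage f⁻¹(Y^z) restricted to X° decomposes as the disjoint union over w ∈ W of X°(w,z) := X° ∩ X(w,z), and each X°(w,z) is open in X° ∩ f⁻¹(Y^z). -/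
/-- In the setting of the general conjugacy theorem: `X` Hausdorff with commuting actions of
finite groups `Z`, `W` by homeomorphisms, `X° = {x | W-stabilizer of x is trivial}`,
`f : X → Y = X/W` the quotient map, `Y^z` the fixed set of `z` on `Y`, and
`X(w,z) = {x | w • x = z • x}`.  Then each `X(w,z)` is closed, `X° ∩ f⁻¹(Y^z)` is the
disjoint union over `w ∈ W` of `X°(w,z) = X° ∩ X(w,z)`, and each `X°(w,z)` is open in the
subspace `X° ∩ f⁻¹(Y^z)`. -/
theorem decomposition_of_fixed_preimage
    {X : Type*} [TopologicalSpace X] [T2Space X]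
    {Z W : Type*} [Group Z] [Group W] [Finite Z] [Finite W]
    [MulAction Z X] [MulAction W X]
    (hZcont : ∀ z : Z, Continuous fun x : X => z • x)
    (hWcont : ∀ w : W, Continuous fun x : X => w • x)
    (hcomm : ∀ (z : Z) (w : W) (x : X), z • (w • x) = w • (z • x))
    (z : Z)
    (X₀ : Set X) (hX₀ : X₀ = {x : X | ∀ w : W, w • x = x → w = 1})
    (Yz : Set (Quotient (MulAction.orbitRel W X)))
    (hYz : Yz = {y | ∀ x : X, Quotient.mk (MulAction.orbitRel W X) x = y →
        Quotient.mk (MulAction.orbitRel W X) (z • x) = y}) :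
    (∀ w : W, IsClosed {x : X | w • x = z • x}) ∧
    (X₀ ∩ (fun x => Quotient.mk (MulAction.orbitRel W X) x) ⁻¹' Yz =
      ⋃ w : W, X₀ ∩ {x : X | w • x = z • x}) ∧
    (∀ w w' : W, w ≠ w' →
      Disjoint (X₀ ∩ {x : X | w • x = z • x}) (X₀ ∩ {x : X | w' • x = z • x})) ∧
    (∀ w : W, IsOpen {p : (X₀ ∩ (fun x => Quotient.mk (MulAction.orbitRel W X) x) ⁻¹' Yz :
        Set X) | w • (p : X) = z • (p : X)}) := by
  have hclosed : ∀ w : W, IsClosed {x : X | w • x = z • x} := fun w =>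
    isClosed_eq (hWcont w) (hZcont z)
  -- key: x ∈ S ↔ x ∈ X₀ and ∃ w, w • x = z • x
  have hmem : ∀ x : X,
      x ∈ X₀ ∩ (fun x => Quotient.mk (MulAction.orbitRel W X) x) ⁻¹' Yz ↔
      x ∈ X₀ ∧ ∃ w : W, w • x = z • x := by
    intro x
    constructor
    · rintro ⟨hx0, hx⟩
      refine ⟨hx0, ?_⟩
      rw [hYz] at hx
      have := hx x rfl
      rw [Quotient.eq] at this
      obtain ⟨u, hu⟩ := this
      exact ⟨u, hu⟩
    · rintro ⟨hx0, w, hw⟩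
      refine ⟨hx0, ?_⟩
      rw [hYz]
      intro x' hx'
      rw [Quotient.eq] at hx' ⊢
      obtain ⟨u, hu⟩ := hx'
      have hu : u • x = x' := hu
      refine ⟨u * w, ?_⟩
      calc (u * w : W) • x = u • w • x := mul_smul u w x
        _ = u • z • x := by rw [hw]
        _ = z • u • x := (hcomm z u x).symm
        _ = z • x' := by rw [hu]
  have heq : X₀ ∩ (fun x => Quotient.mk (MulAction.orbitRel W X) x) ⁻¹' Yz =
      ⋃ w : W, X₀ ∩ {x : X | w • x = z • x} := by
    ext x
    simp only [Set.mem_iUnion, Set.mem_inter_iff, Set.mem_setOf_eq, hmem x]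
    tauto
  have hdisj : ∀ w w' : W, w ≠ w' →
      Disjoint (X₀ ∩ {x : X | w • x = z • x}) (X₀ ∩ {x : X | w' • x = z • x}) := by
    intro w w' hne
    rw [Set.disjoint_left]
    rintro x ⟨hx0, hw⟩ ⟨-, hw'⟩
    apply hne
    have h1 : (w'⁻¹ * w) • x = x := by
      rw [mul_smul, hw, ← hw', inv_smul_smul]
    have := (hX₀ ▸ hx0) _ h1
    rw [inv_mul_eq_one] at this
    exact this.symm
  refine ⟨hclosed, heq, hdisj, ?_⟩
  intro w
  set S := X₀ ∩ (fun x => Quotient.mk (MulAction.orbitRel W X) x) ⁻¹' Yz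
  have hcont : Continuous (fun p : S => (p : X)) := continuous_subtype_val
  have hA : ∀ w' : W, IsClosed {p : S | w' • (p : X) = z • (p : X)} := fun w' =>
    isClosed_eq ((hWcont w').comp hcont) ((hZcont z).comp hcont)
  have hcompl : {p : S | w • (p : X) = z • (p : X)} =
      (⋃ w' ∈ ({w'' : W | w'' ≠ w}), {p : S | w' • (p : X) = z • (p : X)})ᶜ := by
    ext p
    simp only [Set.mem_compl_iff, Set.mem_iUnion, Set.mem_setOf_eq, not_exists]
    constructor
    · intro hp w' hw' hp'
      apply hw'
      have h1 : (w⁻¹ * w') • (p : X) = (p : X) := by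
        rw [mul_smul, hp', ← hp, inv_smul_smul]
      have := (hX₀ ▸ p.2.1) _ h1
      rw [inv_mul_eq_one] at this
      exact this.symm
    · intro h
      obtain ⟨hp0, w', hw'⟩ := (hmem p).mp p.2
      by_cases hww : w' = w
      · rwa [hww] at hw'
      · exact absurd hw' (h w' hww)
  rw [hcompl]
  exact (Set.Finite.isClosed_biUnion (Set.toFinite _) (fun w' _ => hA w')).isOpen_compl
end

section
/- Let R be a reduced irreducible root system with Weyl group W, and let ψ : P(R^∨)/Q(R^∨) → W be the homomorphism defined via the stabilizer Γ_C of the fundamental alcove C: ψ = pr ∘ ξ⁻¹ where ξ : Γ_C ≅ P(R^∨)/Q(R^∨) and pr : W_e → W. Let e ∈ C be the barycenter of the fundamental alcove and let u = Exp(e) ∈ T = Hom(P(R), S¹) be its image under the exponential map identifying T with E/Q(R^∨). Then u is a regular element of T (i.e., α(u) ≠ 1 for all α ∈ R), and for every class ν ∈ P(R^∨)/Q(R^∨) one has t_{−ν}(e) ≡ ψ(ν)(e) modulo Q(R^∨), i.e., x_ν · u = ψ(ν)(u) in T, where x_ν ∈ T is the central element determined by ν. -/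
open Filter Set

private lemma simplex_fixed {l : ℕ} (g : (Fin l → ℝ) ≃ₗ[ℝ] (Fin l → ℝ)) (μ : Fin l → ℝ)
    (T : (Fin l → ℝ) → (Fin l → ℝ)) (hT : ∀ y, T y = g y + μ)
    (hTΔ : T '' {c : Fin l → ℝ | (∀ i, 0 < c i) ∧ ∑ i, c i < 1} =
      {c : Fin l → ℝ | (∀ i, 0 < c i) ∧ ∑ i, c i < 1}) :
    T (fun _ => ((l : ℝ) + 1)⁻¹) = fun _ => ((l : ℝ) + 1)⁻¹ := by
  classical
  set Δ : Set (Fin l → ℝ) := {c | (∀ i, 0 < c i) ∧ ∑ i, c i < 1} with hΔdef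
  set K : Set (Fin l → ℝ) := {c | (∀ i, 0 ≤ c i) ∧ ∑ i, c i ≤ 1} with hKdef
  have hl1 : (0:ℝ) < (l:ℝ) + 1 := by positivity
  set b : Fin l → ℝ := fun _ => ((l : ℝ) + 1)⁻¹ with hbdef
  set Ti : (Fin l → ℝ) → (Fin l → ℝ) := fun y => g.symm (y - μ) with hTidef
  have hTiT : ∀ y, Ti (T y) = y := by intro y; simp [hTidef, hT]
  have hTTi : ∀ y, T (Ti y) = y := by intro y; simp [hTidef, hT]
  have hTinj : Function.Injective T := fun a c h => by rw [← hTiT a, h, hTiT]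
  have hgc : Continuous fun y : Fin l → ℝ => g y :=
    LinearMap.continuous_of_finiteDimensional (g : (Fin l → ℝ) →ₗ[ℝ] (Fin l → ℝ))
  have hgc' : Continuous fun y : Fin l → ℝ => g.symm y :=
    LinearMap.continuous_of_finiteDimensional (g.symm : (Fin l → ℝ) →ₗ[ℝ] (Fin l → ℝ))
  have hTc : Continuous T := by
    have : T = fun y => g y + μ := funext hT
    rw [this]; exact hgc.add continuous_const
  have hTic : Continuous Ti := hgc'.comp (continuous_id.sub continuous_const)
  -- K is closed
  have hKc : IsClosed K := by
    have : K = (⋂ i, (fun c : Fin l → ℝ => c i) ⁻¹' Set.Ici 0) ∩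
        ((fun c : Fin l → ℝ => ∑ i, c i) ⁻¹' Set.Iic 1) := by
      ext c; simp [hKdef, Set.mem_iInter]
    rw [this]
    exact (isClosed_iInter fun i => isClosed_Ici.preimage (continuous_apply i)).inter
      (isClosed_Iic.preimage (continuous_finset_sum _ fun i _ => continuous_apply i))
  have hsub : Δ ⊆ K := fun c hc => ⟨fun i => le_of_lt (hc.1 i), le_of_lt hc.2⟩
  have hsumb : ∑ _i : Fin l, ((l:ℝ)+1)⁻¹ = (l:ℝ) * ((l:ℝ)+1)⁻¹ := by
    simp [Finset.sum_const, Finset.card_univ, nsmul_eq_mul]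
  have hll : (l:ℝ) * ((l:ℝ)+1)⁻¹ < 1 := by
    have h1 : ((l:ℝ)+1) * ((l:ℝ)+1)⁻¹ = 1 := mul_inv_cancel₀ (ne_of_gt hl1)
    have h2 : (0:ℝ) < ((l:ℝ)+1)⁻¹ := inv_pos.mpr hl1
    nlinarith
  -- closure Δ = K
  have hKclos : closure Δ = K := by
    apply subset_antisymm (closure_minimal hsub hKc)
    intro x hx
    have hb : ∀ n : ℕ, (((n:ℝ)+1)⁻¹ • b + (1 - ((n:ℝ)+1)⁻¹) • x) ∈ Δ := by
      intro n
      have hn : (0:ℝ) < (n:ℝ)+1 := by positivity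
      have htn : (0:ℝ) < ((n:ℝ)+1)⁻¹ := inv_pos.mpr hn
      have htn1 : ((n:ℝ)+1)⁻¹ ≤ 1 := by
        rw [inv_le_one_iff₀]; right; linarith
      constructor
      · intro i
        have h1 : 0 ≤ (1 - ((n:ℝ)+1)⁻¹) * x i := mul_nonneg (by linarith) (hx.1 i)
        have h2 : 0 < ((n:ℝ)+1)⁻¹ * ((l:ℝ)+1)⁻¹ := by positivity
        simp only [Pi.add_apply, Pi.smul_apply, smul_eq_mul, hbdef]
        linarith
      · simp only [Pi.add_apply, Pi.smul_apply, smul_eq_mul, hbdef]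
        rw [Finset.sum_add_distrib, ← Finset.mul_sum, ← Finset.mul_sum, hsumb]
        have hx2 := hx.2
        nlinarith [mul_pos htn (sub_pos.mpr hll)]
    have ht0 : Tendsto (fun n : ℕ => ((n:ℝ)+1)⁻¹) atTop (nhds 0) := by
      have := tendsto_one_div_add_atTop_nhds_zero_nat (𝕜 := ℝ)
      simpa [one_div] using this
    have hlim : Tendsto (fun n : ℕ => ((n:ℝ)+1)⁻¹ • b + (1 - ((n:ℝ)+1)⁻¹) • x) atTop
        (nhds ((0:ℝ) • b + (1 - (0:ℝ)) • x)) :=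
      (ht0.smul_const b).add ((tendsto_const_nhds.sub ht0).smul_const x)
    have hlim' : Tendsto (fun n : ℕ => ((n:ℝ)+1)⁻¹ • b + (1 - ((n:ℝ)+1)⁻¹) • x) atTop
        (nhds x) := by simpa using hlim
    exact mem_closure_of_tendsto hlim' (Filter.Eventually.of_forall hb)
  -- T '' K = K
  have hTiΔ : Ti '' Δ = Δ := by
    calc Ti '' Δ = Ti '' (T '' Δ) := by rw [hTΔ]
    _ = Δ := by rw [Set.image_image]; simp [hTiT]
  have hTK : T '' K = K := by
    apply subset_antisymm
    · rw [← hKclos]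
      refine (image_closure_subset_closure_image hTc).trans ?_
      rw [hTΔ]
    · intro x hx
      have h2 : Ti x ∈ K := by
        have h3 : Ti x ∈ Ti '' closure Δ := ⟨x, by rw [hKclos]; exact hx, rfl⟩
        have h4 := image_closure_subset_closure_image hTic h3
        rw [hTiΔ, hKclos] at h4
        exact h4
      exact ⟨Ti x, h2, hTTi x⟩
  have hTiK : Ti '' K = K := by
    calc Ti '' K = Ti '' (T '' K) := by rw [hTK]
    _ = K := by rw [Set.image_image]; simp [hTiT]
  -- midpoints
  have hmidT : ∀ y z, T ((2:ℝ)⁻¹ • (y + z)) = (2:ℝ)⁻¹ • (T y + T z) := by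
    intro y z
    simp only [hT, map_smul, map_add, smul_add]
    module
  have hmidTi : ∀ y z, Ti ((2:ℝ)⁻¹ • (y + z)) = (2:ℝ)⁻¹ • (Ti y + Ti z) := by
    intro y z
    simp only [hTidef, map_smul, map_sub, map_add, smul_add, smul_sub]
    module
  -- vertex predicate
  set Vert : (Fin l → ℝ) → Prop :=
    fun x => x ∈ K ∧ ∀ y ∈ K, ∀ z ∈ K, x = (2:ℝ)⁻¹ • (y + z) → y = z with hVdef
  have hvert_iff : ∀ x, Vert x ↔ (x = 0 ∨ ∃ i, x = Pi.single i (1:ℝ)) := by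
    intro x
    constructor
    · rintro ⟨hxK, hxm⟩
      by_contra h
      push_neg at h
      obtain ⟨hx0, hxs⟩ := h
      have hex : ∃ i, 0 < x i := by
        by_contra h2
        push_neg at h2
        exact hx0 (funext fun i => le_antisymm (h2 i) (hxK.1 i))
      obtain ⟨i, hi⟩ := hex
      by_cases hcase : ∃ j, j ≠ i ∧ 0 < x j
      · obtain ⟨j, hji, hj⟩ := hcase
        set ε : ℝ := min (x i) (x j) with hεdef
        have hε : 0 < ε := lt_min hi hj
        have hεi : ε ≤ x i := min_le_left _ _
        have hεj : ε ≤ x j := min_le_right _ _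
        set d : Fin l → ℝ := Pi.single i 1 - Pi.single j 1 with hddef
        have hsumd : ∑ k, d k = 0 := by
          simp [hddef, Finset.sum_sub_distrib, Finset.sum_pi_single]
        have hdk : ∀ k, k ≠ i → k ≠ j → d k = 0 := by
          intro k hki hkj
          simp [hddef, Pi.single_apply, hki, hkj]
        have hdi : d i = 1 := by
          simp [hddef, Pi.single_apply, hji.symm]
        have hdj : d j = -1 := by
          simp [hddef, Pi.single_apply, hji]
        have hyK : x + ε • d ∈ K := by
          constructor
          · intro k
            by_cases hki : k = i
            · subst hki; simp only [Pi.add_apply, Pi.smul_apply, smul_eq_mul, hdi]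
              linarith
            · by_cases hkj : k = j
              · subst hkj; simp only [Pi.add_apply, Pi.smul_apply, smul_eq_mul, hdj]
                linarith
              · simp only [Pi.add_apply, Pi.smul_apply, smul_eq_mul, hdk k hki hkj]
                have := hxK.1 k; linarith
          · have : ∑ k, (x + ε • d) k = ∑ k, x k + ε * ∑ k, d k := by
              simp only [Pi.add_apply, Pi.smul_apply, smul_eq_mul, Finset.sum_add_distrib,
                ← Finset.mul_sum]
            rw [this, hsumd]
            have := hxK.2; linarith
        have hzK : x - ε • d ∈ K := by
          constructor
          · intro k
            by_cases hki : k = i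
            · subst hki; simp only [Pi.sub_apply, Pi.smul_apply, smul_eq_mul, hdi]
              linarith
            · by_cases hkj : k = j
              · subst hkj; simp only [Pi.sub_apply, Pi.smul_apply, smul_eq_mul, hdj]
                linarith
              · simp only [Pi.sub_apply, Pi.smul_apply, smul_eq_mul, hdk k hki hkj]
                have := hxK.1 k; linarith
          · have : ∑ k, (x - ε • d) k = ∑ k, x k - ε * ∑ k, d k := by
              simp only [Pi.sub_apply, Pi.smul_apply, smul_eq_mul, Finset.sum_sub_distrib,
                ← Finset.mul_sum]
            rw [this, hsumd]
            have := hxK.2; linarith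
        have hmid : x = (2:ℝ)⁻¹ • ((x + ε • d) + (x - ε • d)) := by
          module
        have heq := hxm _ hyK _ hzK hmid
        have := congrFun heq i
        simp only [Pi.add_apply, Pi.sub_apply, Pi.smul_apply, smul_eq_mul, hdi] at this
        linarith
      · push_neg at hcase
        have hzero : ∀ j, j ≠ i → x j = 0 := by
          intro j hj
          exact le_antisymm (hcase j hj) (hxK.1 j)
        have hsumx : ∑ k, x k = x i := by
          rw [Finset.sum_eq_single i]
          · intro k _ hk; exact hzero k hk
          · intro h; exact absurd (Finset.mem_univ i) h
        have hxi1 : x i < 1 := by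
          rcases lt_or_eq_of_le (by rw [← hsumx]; exact hxK.2 : x i ≤ 1) with h | h
          · exact h
          · exfalso
            apply hxs i
            funext k
            by_cases hk : k = i
            · subst hk; rw [h, Pi.single_eq_same]
            · rw [hzero k hk, Pi.single_eq_of_ne hk]
        set ε : ℝ := min (x i) (1 - x i) with hεdef
        have hε : 0 < ε := lt_min hi (by linarith)
        have hεi : ε ≤ x i := min_le_left _ _
        have hεi' : ε ≤ 1 - x i := min_le_right _ _
        have hsinglesum : ∑ k, Pi.single i (1:ℝ) k = 1 := by
          simp [Finset.sum_pi_single]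
        have hyK : x + ε • (Pi.single i 1 : Fin l → ℝ) ∈ K := by
          constructor
          · intro k
            by_cases hk : k = i
            · subst hk
              simp only [Pi.add_apply, Pi.smul_apply, Pi.single_eq_same, smul_eq_mul, mul_one]
              linarith
            · simp only [Pi.add_apply, Pi.smul_apply, Pi.single_eq_of_ne hk, smul_eq_mul,
                mul_zero, add_zero]
              exact hxK.1 k
          · have : ∑ k, (x + ε • (Pi.single i 1 : Fin l → ℝ)) k
                = ∑ k, x k + ε * ∑ k, Pi.single i (1:ℝ) k := by
              simp only [Pi.add_apply, Pi.smul_apply, smul_eq_mul, Finset.sum_add_distrib,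
                ← Finset.mul_sum]
            rw [this, hsinglesum, hsumx]
            linarith
        have hzK : x - ε • (Pi.single i 1 : Fin l → ℝ) ∈ K := by
          constructor
          · intro k
            by_cases hk : k = i
            · subst hk
              simp only [Pi.sub_apply, Pi.smul_apply, Pi.single_eq_same, smul_eq_mul, mul_one]
              linarith
            · simp only [Pi.sub_apply, Pi.smul_apply, Pi.single_eq_of_ne hk, smul_eq_mul,
                mul_zero, sub_zero]
              exact hxK.1 k
          · have : ∑ k, (x - ε • (Pi.single i 1 : Fin l → ℝ)) k
                = ∑ k, x k - ε * ∑ k, Pi.single i (1:ℝ) k := by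
              simp only [Pi.sub_apply, Pi.smul_apply, smul_eq_mul, Finset.sum_sub_distrib,
                ← Finset.mul_sum]
            rw [this, hsinglesum, hsumx]
            have := hxK.2
            linarith
        have hmid : x = (2:ℝ)⁻¹ • ((x + ε • (Pi.single i 1 : Fin l → ℝ)) + (x - ε • (Pi.single i 1 : Fin l → ℝ))) := by
          module
        have heq := hxm _ hyK _ hzK hmid
        have := congrFun heq i
        simp only [Pi.add_apply, Pi.sub_apply, Pi.smul_apply, Pi.single_eq_same, smul_eq_mul,
          mul_one] at this
        linarith
    · rintro (rfl | ⟨i, rfl⟩)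
      · refine ⟨⟨fun i => le_refl 0, by simp⟩, ?_⟩
        intro y hy z hz hmid
        have hyz : ∀ k, y k + z k = 0 := by
          intro k
          have := congrFun hmid k
          simp only [Pi.zero_apply, Pi.smul_apply, Pi.add_apply, smul_eq_mul] at this
          linarith
        funext k
        have h1 := hy.1 k
        have h2 := hz.1 k
        have := hyz k
        linarith
      · have hmem : Pi.single i (1:ℝ) ∈ K := by
          constructor
          · intro k
            rcases eq_or_ne k i with rfl | hk
            · simp
            · simp [Pi.single_eq_of_ne hk]
          · simp [Finset.sum_pi_single]
        refine ⟨hmem, ?_⟩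
        intro y hy z hz hmid
        have hboundy : ∀ k, y k ≤ 1 := by
          intro k
          have h1 : y k ≤ ∑ m, y m :=
            Finset.single_le_sum (fun m _ => hy.1 m) (Finset.mem_univ k)
          linarith [hy.2]
        have hboundz : ∀ k, z k ≤ 1 := by
          intro k
          have h1 : z k ≤ ∑ m, z m :=
            Finset.single_le_sum (fun m _ => hz.1 m) (Finset.mem_univ k)
          linarith [hz.2]
        have hmi := congrFun hmid i
        simp only [Pi.single_eq_same, Pi.smul_apply, Pi.add_apply, smul_eq_mul] at hmi
        have hyi : y i = 1 := by
          have := hboundz i; have := hboundy i; linarith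
        have hzi : z i = 1 := by
          have := hboundy i; linarith
        have hrest : ∀ (w : Fin l → ℝ), w ∈ K → w i = 1 → w = Pi.single i (1:ℝ) := by
          intro w hw hwi
          have h1 : ∑ k ∈ Finset.univ.erase i, w k = (∑ k, w k) - w i := by
            rw [← Finset.add_sum_erase _ _ (Finset.mem_univ i)]; ring
          have h2 : ∑ k ∈ Finset.univ.erase i, w k ≤ 0 := by
            rw [h1, hwi]; linarith [hw.2]
          have h3 : ∀ k ∈ Finset.univ.erase i, w k = 0 := by
            intro k hk
            by_contra h4
            have h5 : 0 < w k := lt_of_le_of_ne (hw.1 k) (Ne.symm h4)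
            have h6 : ∑ k ∈ Finset.univ.erase i, w k > 0 :=
              Finset.sum_pos' (fun m _ => hw.1 m) ⟨k, hk, h5⟩
            linarith
          funext k
          rcases eq_or_ne k i with rfl | hk
          · rw [hwi, Pi.single_eq_same]
          · rw [h3 k (Finset.mem_erase.mpr ⟨hk, Finset.mem_univ k⟩), Pi.single_eq_of_ne hk]
        rw [hrest y hy hyi, hrest z hz hzi]
  -- transport of vertices
  have htrans : ∀ (F Fi : (Fin l → ℝ) → (Fin l → ℝ)),
      (∀ y, Fi (F y) = y) → (∀ y, F (Fi y) = y) → F '' K = K →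
      (∀ y z, Fi ((2:ℝ)⁻¹ • (y + z)) = (2:ℝ)⁻¹ • (Fi y + Fi z)) →
      ∀ x, Vert x → Vert (F x) := by
    intro F Fi hFiF hFFi hFK hFimid x hx
    obtain ⟨hxK, hxm⟩ := hx
    refine ⟨by rw [← hFK]; exact ⟨x, hxK, rfl⟩, ?_⟩
    intro y hy z hz hmid
    have hFiK : ∀ w, w ∈ K → Fi w ∈ K := by
      intro w hw
      rw [← hFK] at hw
      obtain ⟨a, ha, rfl⟩ := hw
      rwa [hFiF]
    have hx' : x = (2:ℝ)⁻¹ • (Fi y + Fi z) := by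
      have := congrArg Fi hmid
      rw [hFiF, hFimid] at this
      exact this
    have heq := hxm _ (hFiK y hy) _ (hFiK z hz) hx'
    have := congrArg F heq
    rwa [hFFi, hFFi] at this
  have htransT : ∀ x, Vert x → Vert (T x) := htrans T Ti hTiT hTTi hTK hmidTi
  have htransTi : ∀ x, Vert x → Vert (Ti x) := htrans Ti T hTTi hTiT hTiK hmidT
  have hTVert : T '' {x | Vert x} = {x | Vert x} := by
    apply subset_antisymm
    · rintro _ ⟨x, hx, rfl⟩; exact htransT x hx
    · intro x hx
      exact ⟨Ti x, htransTi x hx, hTTi x⟩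
  -- Finset of vertices
  set A : Finset (Fin l → ℝ) :=
    insert (0 : Fin l → ℝ) (Finset.image (fun i => Pi.single i (1:ℝ)) Finset.univ) with hAdef
  have hsingle_inj : Function.Injective (fun i : Fin l => Pi.single i (1:ℝ)) := by
    intro a c h
    by_contra hne
    have h2 : (Pi.single a 1 : Fin l → ℝ) = (Pi.single c 1 : Fin l → ℝ) := h
    have h3 := congrFun h2 a
    rw [Pi.single_eq_same, Pi.single_eq_of_ne hne] at h3
    exact one_ne_zero h3
  have h0A : (0 : Fin l → ℝ) ∉ Finset.image (fun i => Pi.single i (1:ℝ)) Finset.univ := by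
    simp only [Finset.mem_image, Finset.mem_univ, true_and, not_exists]
    intro i h
    have h2 : (Pi.single i 1 : Fin l → ℝ) = 0 := h
    have h3 := congrFun h2 i
    rw [Pi.single_eq_same, Pi.zero_apply] at h3
    exact one_ne_zero h3
  have hAset : (A : Set (Fin l → ℝ)) = {x | Vert x} := by
    ext x
    rw [Set.mem_setOf_eq, hvert_iff]
    simp only [hAdef, Finset.coe_insert, Finset.coe_image, Finset.coe_univ, Set.image_univ,
      Set.mem_insert_iff, Set.mem_range]
    constructor
    · rintro (rfl | ⟨i, rfl⟩)
      · exact Or.inl rfl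
      · exact Or.inr ⟨i, rfl⟩
    · rintro (rfl | ⟨i, rfl⟩)
      · exact Or.inl rfl
      · exact Or.inr ⟨i, rfl⟩
  have hsumA : ∑ v ∈ A, v = (fun _ => (1:ℝ)) := by
    rw [hAdef, Finset.sum_insert h0A,
      Finset.sum_image (fun a _ c _ h => hsingle_inj h), zero_add]
    exact Finset.univ_sum_single (fun _ => (1:ℝ))
  have hcardA : A.card = l + 1 := by
    rw [hAdef, Finset.card_insert_of_notMem h0A,
      Finset.card_image_of_injective _ hsingle_inj, Finset.card_univ, Fintype.card_fin]
  have hTA : Finset.image T A = A := by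
    apply Finset.coe_injective
    rw [Finset.coe_image, hAset]
    exact hTVert
  have hsumTA : ∑ v ∈ A, T v = ∑ v ∈ A, v := by
    have h2 : ∑ v ∈ Finset.image T A, v = ∑ v ∈ A, T v :=
      Finset.sum_image (fun a _ c _ h => hTinj h)
    rw [← h2, hTA]
  have h1 : ∑ v ∈ A, T v = g (∑ v ∈ A, v) + (l+1 : ℕ) • μ := by
    have : ∀ v ∈ A, T v = g v + μ := fun v _ => hT v
    rw [Finset.sum_congr rfl this, Finset.sum_add_distrib, ← map_sum, Finset.sum_const, hcardA]
  have hgS : g (∑ v ∈ A, v) = (∑ v ∈ A, v) - ((l:ℝ)+1) • μ := by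
    have h2 : g (∑ v ∈ A, v) + (l+1 : ℕ) • μ = ∑ v ∈ A, v := by rw [← h1, hsumTA]
    have h3 : ((l+1 : ℕ) : ℝ) • μ = (l+1 : ℕ) • μ := Nat.cast_smul_eq_nsmul ℝ _ μ
    have h4 : ((l+1 : ℕ) : ℝ) = (l:ℝ) + 1 := by push_cast; ring
    rw [← h3, h4] at h2
    linear_combination (norm := module) h2
  have hbS : b = ((l:ℝ)+1)⁻¹ • ∑ v ∈ A, v := by
    rw [hsumA]
    funext j
    simp [hbdef]
  rw [hbS, hT, map_smul, hgS, smul_sub, smul_smul, inv_mul_cancel₀ (ne_of_gt hl1), one_smul]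
  abel

/-- A root system: a root pairing whose roots and coroots span their ambient modules
(the `RootSystem` structure of the older Mathlib). -/
structure RootSystem (ι R M N : Type*) [CommRing R] [AddCommGroup M] [Module R M]
    [AddCommGroup N] [Module R N] extends RootPairing ι R M N where
  span_eq_top : Submodule.span R (Set.range root) = ⊤
  span_eq_top' : Submodule.span R (Set.range coroot) = ⊤

/-- **The barycenter of the fundamental alcove and the homomorphism `ψ`**
(first part of Theorem `t:monodromy`).  In the setting of a reduced irreducible
crystallographic root system `P` with coweight space `E = Fin l → ℝ`, base `s`, highest root
`θ = Σ δᵢ α_{s i}` and fundamental coweights `ω`, the torus `T = Hom(P(R), S¹)` is identified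
with `E/Q(R^∨)` via `Exp`, and the barycenter of the fundamental alcove
`C = {e | 0 < ⟨α_{s i}, e⟩, ⟨θ, e⟩ < 1}` is `e = (l+1)⁻¹ Σⱼ δⱼ⁻¹ ωⱼ`.  Then `u = Exp(e)` is a
regular element of `T` (no affine root hyperplane passes through `e`), every element of the
stabilizer `Γ_C ⊆ W_e = P(R^∨) ⋊ W` of `C` fixes `e`, and for every `ν ∈ P(R^∨)/Q(R^∨)`,
writing `ξ⁻¹(ν) = t_μ ∘ ψ(ν) ∈ Γ_C` (`μ ∈ PRv` representing `ν`, `g = ψ(ν) ∈ W`), one has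
`t_{-ν}(e) ≡ ψ(ν)(e) mod Q(R^∨)`, i.e. `x_ν · u = ψ(ν)(u)` in `T`. -/
theorem barycenter_regular_and_psi_identity
    {l : ℕ} {ι V : Type*} [Fintype ι] [AddCommGroup V] [Module ℝ V]
    (P : RootSystem ι ℝ V (Fin l → ℝ))
    (hred : P.IsReduced) (hcrys : P.IsCrystallographic)
    (hcorootSpan : Submodule.span ℝ (Set.range P.coroot) = ⊤)
    (hirr : ¬∃ s : Set ι, s.Nonempty ∧ sᶜ.Nonempty ∧
      ∀ i ∈ s, ∀ j ∈ sᶜ, P.toLinearMap (P.root i) (P.coroot j) = 0)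
    (s : Fin l → ι)
    (hbase : ∀ k : ι,
      (∃ c : Fin l → ℕ, P.root k = ∑ j, (c j : ℝ) • P.root (s j)) ∨
      (∃ c : Fin l → ℕ, P.root k = -∑ j, (c j : ℝ) • P.root (s j)))
    (θ : ι) (δ : Fin l → ℕ)
    (hθ : P.root θ = ∑ i, (δ i : ℝ) • P.root (s i))
    (hhighest : ∀ k : ι, ∃ c : Fin l → ℕ,
      P.root θ - P.root k = ∑ j, (c j : ℝ) • P.root (s j))
    (ω : Fin l → (Fin l → ℝ))
    (hω : ∀ i j : Fin l, P.toLinearMap (P.root (s i)) (ω j) = if i = j then 1 else 0)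
    (PRv QRv : AddSubgroup (Fin l → ℝ))
    (hPRv : PRv = {n : Fin l → ℝ | ∀ i : ι, ∃ z : ℤ, P.toLinearMap (P.root i) n = (z : ℝ)})
    (hQRv : QRv = AddSubgroup.closure (Set.range P.coroot))
    (Hc : Set (Fin l → ℝ))
    (hHc : Hc = {e : Fin l → ℝ | ∀ i : ι, ∀ n : ℤ, P.toLinearMap (P.root i) e ≠ (n : ℝ)})
    (C : Set (Fin l → ℝ))
    (hC : C = {e : Fin l → ℝ |
      (∀ i : Fin l, 0 < P.toLinearMap (P.root (s i)) e) ∧ P.toLinearMap (P.root θ) e < 1})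
    -- the barycenter of the fundamental alcove:
    (e : Fin l → ℝ) (he : e = ((l : ℝ) + 1)⁻¹ • ∑ j, ((δ j : ℝ))⁻¹ • ω j) :
    e ∈ Hc ∧
    (∀ (T : (Fin l → ℝ) ≃ (Fin l → ℝ)) (g : (Fin l → ℝ) ≃ₗ[ℝ] (Fin l → ℝ))
        (μ : Fin l → ℝ), g ∈ Subgroup.closure (Set.range P.flip.reflection) → μ ∈ PRv → (∀ y, T y = g y + μ) →
        T '' C = C → T e = e ∧ (e - μ) - g e ∈ QRv) := by
  classical
  have hl1 : (0:ℝ) < (l:ℝ) + 1 := by positivity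
  -- pairing against the fundamental coweights
  have key : ∀ (a : Fin l → ℝ) (i : Fin l),
      P.toLinearMap (∑ j, a j • P.root (s j)) (ω i) = a i := by
    intro a i
    simp only [map_sum, map_smul, LinearMap.sum_apply, LinearMap.smul_apply, hω,
      smul_eq_mul, mul_ite, mul_one, mul_zero]
    simp
  have hθω : ∀ i, P.toLinearMap (P.root θ) (ω i) = (δ i : ℝ) := by
    intro i; rw [hθ]; exact key (fun j => (δ j : ℝ)) i
  have hδpos : ∀ i, 0 < (δ i : ℝ) := by
    intro i
    obtain ⟨c, hc⟩ := hhighest (s i)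
    have h1 := congrArg (fun v => P.toLinearMap v (ω i)) hc
    simp only [map_sub, LinearMap.sub_apply] at h1
    rw [hθω, key] at h1
    have hsω : P.toLinearMap (P.root (s i)) (ω i) = 1 := by rw [hω]; simp
    rw [hsω] at h1
    have : (0:ℝ) ≤ (c i : ℝ) := Nat.cast_nonneg _
    linarith
  have hδne : ∀ i, (δ i : ℝ) ≠ 0 := fun i => ne_of_gt (hδpos i)
  have eval_e : ∀ x : V,
      P.toLinearMap x e = ((l:ℝ)+1)⁻¹ * ∑ j, ((δ j:ℝ))⁻¹ * P.toLinearMap x (ω j) := by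
    intro x
    rw [he, map_smul, map_sum]
    simp only [map_smul, smul_eq_mul]
  have esi : ∀ i, P.toLinearMap (P.root (s i)) e = ((l:ℝ)+1)⁻¹ * ((δ i:ℝ))⁻¹ := by
    intro i
    rw [eval_e]
    congr 1
    rw [Finset.sum_eq_single i]
    · rw [hω]; simp
    · intro j _ hj; rw [hω]; simp [Ne.symm hj]
    · intro h; exact absurd (Finset.mem_univ i) h
  have evalθ : ∀ x, P.toLinearMap (P.root θ) x = ∑ i, (δ i : ℝ) * P.toLinearMap (P.root (s i)) x := by
    intro x
    rw [hθ]
    simp [map_sum, LinearMap.sum_apply, map_smul, LinearMap.smul_apply]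
  -- coefficient bound
  have hbound : ∀ (k : ι) (c : Fin l → ℕ),
      P.root k = ∑ j, (c j : ℝ) • P.root (s j) → ∀ j, (c j : ℝ) ≤ (δ j : ℝ) := by
    intro k c hk j
    obtain ⟨d, hd⟩ := hhighest k
    have h1 := congrArg (fun v => P.toLinearMap v (ω j)) hd
    simp only [map_sub, LinearMap.sub_apply] at h1
    rw [hθω, hk, key, key] at h1
    have : (0:ℝ) ≤ (d j : ℝ) := Nat.cast_nonneg _
    linarith
  -- Part 1 : e ∈ Hc
  have part1 : e ∈ Hc := by
    rw [hHc]
    intro k n hkn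
    -- get a representation with bounded coefficients
    obtain ⟨c, hcb, hc0, hsign⟩ : ∃ c : Fin l → ℕ, (∀ j, (c j : ℝ) ≤ (δ j : ℝ)) ∧
        (∃ j, 0 < (c j : ℝ)) ∧
        (P.toLinearMap (P.root k) e = ((l:ℝ)+1)⁻¹ * ∑ j, (c j:ℝ) * ((δ j:ℝ))⁻¹ ∨
         P.toLinearMap (P.root k) e = -(((l:ℝ)+1)⁻¹ * ∑ j, (c j:ℝ) * ((δ j:ℝ))⁻¹)) := by
      have hval : ∀ c : Fin l → ℕ, P.toLinearMap (∑ j, (c j:ℝ) • P.root (s j)) e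
          = ((l:ℝ)+1)⁻¹ * ∑ j, (c j:ℝ) * ((δ j:ℝ))⁻¹ := by
        intro c
        rw [map_sum, LinearMap.sum_apply]
        have : ∀ j, P.toLinearMap ((c j:ℝ) • P.root (s j)) e = (c j:ℝ) * (((l:ℝ)+1)⁻¹ * ((δ j:ℝ))⁻¹) := by
          intro j
          rw [map_smul, LinearMap.smul_apply, smul_eq_mul, esi]
        rw [Finset.sum_congr rfl fun j _ => this j, Finset.mul_sum]
        congr 1
        funext j
        ring
      have hnonzero : ∀ c : Fin l → ℕ,
          (P.root k = ∑ j, (c j : ℝ) • P.root (s j) ∨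
           P.root k = -∑ j, (c j : ℝ) • P.root (s j)) → ∃ j, 0 < (c j : ℝ) := by
        intro c hc
        by_contra h
        push_neg at h
        have hz : ∀ j, (c j : ℝ) = 0 := fun j => le_antisymm (h j) (Nat.cast_nonneg _)
        have : P.root k = 0 := by
          rcases hc with hc | hc <;> rw [hc] <;> simp [hz]
        exact P.ne_zero k this
      rcases hbase k with ⟨c, hc⟩ | ⟨c, hc⟩
      · exact ⟨c, hbound k c hc, hnonzero c (Or.inl hc),
          Or.inl (by rw [hc, hval])⟩
      · refine ⟨c, ?_, hnonzero c (Or.inr hc), Or.inr (by rw [hc, map_neg, LinearMap.neg_apply, hval])⟩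
        -- bound via the root  -root k
        set k' := P.reflectionPerm k k with hk'def
        have hk' : P.root k' = ∑ j, (c j : ℝ) • P.root (s j) := by
          rw [hk'def, P.root_reflectionPerm, P.reflection_apply_self, hc, neg_neg]
        exact hbound k' c hk'
    set S : ℝ := ∑ j, (c j:ℝ) * ((δ j:ℝ))⁻¹ with hSdef
    obtain ⟨j0, hj0⟩ := hc0
    have hSpos : 0 < S := by
      apply Finset.sum_pos'
      · intro j _
        exact mul_nonneg (Nat.cast_nonneg _) (le_of_lt (inv_pos.mpr (hδpos j)))
      · exact ⟨j0, Finset.mem_univ j0, mul_pos hj0 (inv_pos.mpr (hδpos j0))⟩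
    have hSle : S ≤ (l:ℝ) := by
      calc S ≤ ∑ _j : Fin l, (1:ℝ) := by
            apply Finset.sum_le_sum
            intro j _
            rw [← mul_inv_cancel₀ (hδne j)]
            exact mul_le_mul_of_nonneg_right (hcb j) (le_of_lt (inv_pos.mpr (hδpos j)))
        _ = (l:ℝ) := by simp
    have hinv : (0:ℝ) < ((l:ℝ)+1)⁻¹ := inv_pos.mpr hl1
    have hlt1 : ((l:ℝ)+1)⁻¹ * S < 1 := by
      have h1 : ((l:ℝ)+1) * ((l:ℝ)+1)⁻¹ = 1 := mul_inv_cancel₀ (ne_of_gt hl1)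
      nlinarith
    have hgt0 : 0 < ((l:ℝ)+1)⁻¹ * S := mul_pos hinv hSpos
    rcases hsign with hv | hv
    · rw [hv] at hkn
      have h1 : (0:ℤ) < n := by exact_mod_cast hkn ▸ hgt0
      have h2 : n < 1 := by exact_mod_cast hkn ▸ hlt1
      omega
    · rw [hv] at hkn
      have h1 : (n:ℝ) < 0 := by rw [← hkn]; linarith
      have h2 : (-1:ℝ) < n := by rw [← hkn]; linarith
      have h1' : n < 0 := by exact_mod_cast h1
      have h2' : (-1:ℤ) < n := by exact_mod_cast h2
      omega
  refine ⟨part1, ?_⟩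
  -- Part 2
  intro T g μ hg hμ hT hTC
  -- the coordinate change
  set F : (Fin l → ℝ) →ₗ[ℝ] (Fin l → ℝ) :=
    LinearMap.pi (fun i => (δ i : ℝ) • P.toLinearMap (P.root (s i))) with hFdef
  have hF : ∀ x i, F x i = (δ i:ℝ) * P.toLinearMap (P.root (s i)) x := fun x i => rfl
  have hFinj : Function.Injective F := by
    rw [injective_iff_map_eq_zero]
    intro x hx
    have hsi : ∀ i, P.toLinearMap (P.root (s i)) x = 0 := by
      intro i
      have h1 := congrFun hx i
      rw [hF] at h1
      simp only [Pi.zero_apply] at h1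
      rcases mul_eq_zero.mp h1 with h | h
      · exact absurd h (hδne i)
      · exact h
    have hall : ∀ k : ι, P.toLinearMap (P.root k) x = 0 := by
      intro k
      rcases hbase k with ⟨c, hc⟩ | ⟨c, hc⟩ <;> rw [hc] <;>
        simp only [map_sum, map_neg, map_smul, LinearMap.sum_apply, LinearMap.neg_apply,
          LinearMap.smul_apply, smul_eq_mul, hsi, mul_zero, Finset.sum_const_zero, neg_zero]
    have hflip : P.toLinearMap.flip x = 0 := by
      apply LinearMap.ext_on P.span_eq_top
      rintro v ⟨k, rfl⟩
      simpa using hall k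
    haveI := P.isPerfPair_toLinearMap
    exact (LinearMap.IsPerfPair.bijective_right P.toLinearMap).injective
      (show P.toLinearMap.flip x = P.toLinearMap.flip 0 by rw [map_zero]; exact hflip)
  have hFsurj : Function.Surjective F := LinearMap.injective_iff_surjective.mp hFinj
  set Φ : (Fin l → ℝ) ≃ₗ[ℝ] (Fin l → ℝ) := LinearEquiv.ofBijective F ⟨hFinj, hFsurj⟩ with hΦdef
  have hΦ : ∀ x, Φ x = F x := fun _ => rfl
  set Δ : Set (Fin l → ℝ) := {c | (∀ i, 0 < c i) ∧ ∑ i, c i < 1} with hΔdef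
  have hmem : ∀ x, x ∈ C ↔ Φ x ∈ Δ := by
    intro x
    rw [hC, hΔdef]
    simp only [Set.mem_setOf_eq]
    have hiff : ∀ i, (0 < P.toLinearMap (P.root (s i)) x ↔ 0 < Φ x i) := by
      intro i
      rw [hΦ, hF]
      constructor
      · intro h; exact mul_pos (hδpos i) h
      · intro h
        by_contra h2
        push_neg at h2
        nlinarith [hδpos i]
    have hsum : P.toLinearMap (P.root θ) x = ∑ i, Φ x i := by
      rw [evalθ]
      exact Finset.sum_congr rfl fun i _ => (hF x i).symm ▸ rfl
    rw [hsum]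
    exact and_congr (forall_congr' hiff) Iff.rfl
  have hΦC : Φ '' C = Δ := by
    ext y
    constructor
    · rintro ⟨x, hx, rfl⟩
      exact (hmem x).mp hx
    · intro hy
      exact ⟨Φ.symm y, (hmem _).mpr (by rwa [Φ.apply_symm_apply]), Φ.apply_symm_apply y⟩
  have hΦe : Φ e = fun _ => ((l:ℝ)+1)⁻¹ := by
    funext i
    rw [hΦ, hF, esi i, mul_comm (((l:ℝ)+1)⁻¹) _, ← mul_assoc, mul_inv_cancel₀ (hδne i), one_mul]
  -- the transported affine map
  set T' : (Fin l → ℝ) → (Fin l → ℝ) := fun y => Φ (T (Φ.symm y)) with hT'def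
  set g' : (Fin l → ℝ) ≃ₗ[ℝ] (Fin l → ℝ) := Φ.symm.trans (g.trans Φ) with hg'def
  have hT'aff : ∀ y, T' y = g' y + Φ μ := by
    intro y
    show Φ (T (Φ.symm y)) = _
    rw [hT (Φ.symm y), map_add]
    simp [hg'def, LinearEquiv.trans_apply]
  have hT'Δ : T' '' Δ = Δ := by
    have h1 : Φ.symm '' Δ = C := by
      rw [← hΦC, Set.image_image]
      simp [Set.image_id']
    have h2 : T' '' Δ = Φ '' (T '' (Φ.symm '' Δ)) := by
      rw [Set.image_image, Set.image_image]
    rw [h2, h1, hTC, hΦC]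
  have hfix := simplex_fixed g' (Φ μ) T' hT'aff (by rw [← hΔdef]; exact hT'Δ)
  have hTe : T e = e := by
    apply Φ.injective
    calc Φ (T e) = T' (Φ e) := by
          show _ = Φ (T (Φ.symm (Φ e)))
          rw [Φ.symm_apply_apply]
    _ = (fun _ => ((l:ℝ)+1)⁻¹) := by rw [hΦe]; exact hfix
    _ = Φ e := hΦe.symm
  refine ⟨hTe, ?_⟩
  have hge : g e = e - μ := by
    have h1 := hT e
    rw [hTe] at h1
    exact eq_sub_of_add_eq h1.symm
  rw [hge, sub_self]
  exact zero_mem QRv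
end

section
/- Let G be a connected simply connected simple complex algebraic group with maximal torus A, Weyl group W, center Z, and the homomorphism ψ : P(R^∨)/Q(R^∨) → W as above (with a fixed isomorphism Z ≅ P(R^∨)/Q(R^∨), x ↦ μ_x). Then there exists a single regular element u ∈ A such that ψ(μ_x)(u) = x·u simultaneously for all x ∈ Z. -/
/-- **Simultaneous regular element** (Theorem `t:s`(a) / first part of Theorem
`t:monodromy`).  Let `G` be a connected simply connected simple complex algebraic group with
maximal torus `A`, Weyl group `W`, center `Z ≅ P(R^∨)/Q(R^∨)` (via a fixed embedding
`ℚ/ℤ ↪ ℂˣ`) and Bourbaki homomorphism `ψ : P(R^∨)/Q(R^∨) → W`.  We identify the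
(compact part of the) torus `A = Hom(P(R), ℂˣ)` with `E/Q(R^∨)` where `E = Fin l → ℝ` is the
coweight space of the (reduced irreducible crystallographic) root system `P`; a class
`ν ∈ P(R^∨)/Q(R^∨)` corresponds to the central element `x_ν ∈ Z`, and `ψ(ν)` is the linear
part of the unique element of the stabilizer `Γ_C` of the fundamental alcove `C` whose
translation part represents `ν`.  Then there exists a single regular element `u ∈ A`
(represented by `n ∈ E`, regular meaning `⟨α, n⟩ ∉ ℤ` for all roots `α`) such that
`ψ(μ_x)(u) = x · u` simultaneously for all `x ∈ Z`; i.e. for every element of `Γ_C`, with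
linear part `g` and translation part `μ ∈ P(R^∨)`, one has `(n - μ) - g(n) ∈ Q(R^∨)`. -/
theorem exists_simultaneous_regular_element
    {l : ℕ} {ι V : Type*} [Fintype ι] [AddCommGroup V] [Module ℝ V]
    (P : RootPairing ι ℝ V (Fin l → ℝ))
    (hrootSpan : Submodule.span ℝ (Set.range P.root) = ⊤)
    (hred : P.IsReduced) (hcrys : P.IsCrystallographic)
    (hcorootSpan : Submodule.span ℝ (Set.range P.coroot) = ⊤)
    (hirr : ¬∃ s : Set ι, s.Nonempty ∧ sᶜ.Nonempty ∧
      ∀ i ∈ s, ∀ j ∈ sᶜ, P.toLinearMap (P.root i) (P.coroot j) = 0)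
    (s : Fin l → ι)
    (hbase : ∀ k : ι,
      (∃ c : Fin l → ℕ, P.root k = ∑ j, (c j : ℝ) • P.root (s j)) ∨
      (∃ c : Fin l → ℕ, P.root k = -∑ j, (c j : ℝ) • P.root (s j)))
    (θ : ι)
    (hhighest : ∀ k : ι, ∃ c : Fin l → ℕ,
      P.root θ - P.root k = ∑ j, (c j : ℝ) • P.root (s j))
    (PRv QRv : AddSubgroup (Fin l → ℝ))
    (hPRv : PRv = {n : Fin l → ℝ | ∀ i : ι, ∃ z : ℤ, P.toLinearMap (P.root i) n = (z : ℝ)})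
    (hQRv : QRv = AddSubgroup.closure (Set.range P.coroot))
    (C : Set (Fin l → ℝ))
    (hC : C = {e : Fin l → ℝ |
      (∀ i : Fin l, 0 < P.toLinearMap (P.root (s i)) e) ∧ P.toLinearMap (P.root θ) e < 1}) :
    ∃ n : Fin l → ℝ,
      (∀ i : ι, ∀ z : ℤ, P.toLinearMap (P.root i) n ≠ (z : ℝ)) ∧
      (∀ (T : (Fin l → ℝ) ≃ (Fin l → ℝ)) (g : (Fin l → ℝ) ≃ₗ[ℝ] (Fin l → ℝ))
          (μ : Fin l → ℝ), g ∈ Subgroup.closure (Set.range P.flip.reflection) → μ ∈ PRv → (∀ y, T y = g y + μ) →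
          T '' C = C → (n - μ) - g n ∈ QRv) := by
  classical
  -- membership in PRv unfolded
  have hPint : ∀ μ : Fin l → ℝ,
      μ ∈ PRv ↔ ∀ i : ι, ∃ z : ℤ, P.toLinearMap (P.root i) μ = (z : ℝ) := by
    intro μ
    constructor
    · intro h
      have h' : μ ∈ (PRv : Set (Fin l → ℝ)) := h
      rw [hPRv] at h'; exact h'
    · intro h
      have h' : μ ∈ (PRv : Set (Fin l → ℝ)) := by rw [hPRv]; exact h
      exact h'
  -- crystallographic pairings
  have hpair : ∀ i j : ι, ∃ z : ℤ, P.toLinearMap (P.root i) (P.coroot j) = (z : ℝ) := by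
    intro i j
    obtain ⟨z, hz⟩ := hcrys.exists_value i j
    exact ⟨z, by rw [P.root_coroot_eq_pairing, ← hz, algebraMap_int_eq, eq_intCast]⟩
  -- evaluation of integer combinations of simple roots
  have keyval : ∀ (c : Fin l → ℕ) (e : Fin l → ℝ),
      P.toLinearMap (∑ j, (c j : ℝ) • P.root (s j)) e
        = ∑ j, (c j : ℝ) * P.toLinearMap (P.root (s j)) e := by
    intro c e
    rw [map_sum, LinearMap.sum_apply]
    exact Finset.sum_congr rfl fun j _ => by
      rw [map_smul, LinearMap.smul_apply, smul_eq_mul]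
  -- evaluation of affine combinations
  have heval : ∀ (v : V) (x y : Fin l → ℝ) (t : ℝ),
      P.toLinearMap v (x + t • y) = P.toLinearMap v x + t * P.toLinearMap v y := by
    intro v x y t
    rw [map_add, map_smul, smul_eq_mul]
  -- kernel lemma
  have hker : ∀ δ : Fin l → ℝ, (∀ j : Fin l, P.toLinearMap (P.root (s j)) δ = 0) → δ = 0 := by
    intro δ h
    have hall : ∀ k : ι, P.toLinearMap (P.root k) δ = 0 := by
      intro k
      rcases hbase k with ⟨c, hc⟩ | ⟨c, hc⟩
      · rw [hc, keyval]
        exact Finset.sum_eq_zero fun j _ => by rw [h j, mul_zero]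
      · rw [hc, map_neg, LinearMap.neg_apply, keyval, neg_eq_zero]
        exact Finset.sum_eq_zero fun j _ => by rw [h j, mul_zero]
    have hfl : P.toLinearMap.flip δ = 0 := by
      apply LinearMap.ext_on hrootSpan
      rintro - ⟨k, rfl⟩
      simpa using hall k
    exact (LinearMap.IsPerfPair.bijective_right P.toLinearMap).injective (by simpa using hfl)
  -- the coordinate map
  set L : (Fin l → ℝ) →ₗ[ℝ] (Fin l → ℝ) :=
    LinearMap.pi (fun j => P.toLinearMap (P.root (s j))) with hL
  have hLinj : Function.Injective L := by
    rw [← LinearMap.ker_eq_bot]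
    rw [Submodule.eq_bot_iff]
    intro δ hδ
    exact hker δ (fun j => congrFun (LinearMap.mem_ker.mp hδ) j)
  have hLsurj : Function.Surjective L := LinearMap.injective_iff_surjective.mp hLinj
  -- a point of C
  obtain ⟨e1, he1⟩ := hLsurj (fun _ => (1 : ℝ))
  have he1j : ∀ j, P.toLinearMap (P.root (s j)) e1 = 1 := fun j => congrFun he1 j
  set m : ℝ := max (P.toLinearMap (P.root θ) e1) 1 with hm
  have hm0 : 0 < m := lt_of_lt_of_le one_pos (le_max_right _ _)
  set c0 : ℝ := (2 * m)⁻¹ with hc0def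
  have hc0 : 0 < c0 := by positivity
  set n0 : Fin l → ℝ := c0 • e1 with hn0
  have he0C : n0 ∈ C := by
    rw [hC]
    refine ⟨fun i => ?_, ?_⟩
    · have : P.toLinearMap (P.root (s i)) n0 = c0 * P.toLinearMap (P.root (s i)) e1 := by
        rw [hn0, map_smul]; rfl
      rw [this, he1j]; simpa using hc0
    · have h1 : P.toLinearMap (P.root θ) n0 = c0 * P.toLinearMap (P.root θ) e1 := by
        rw [hn0, map_smul]; rfl
      have h2 : c0 * P.toLinearMap (P.root θ) e1 ≤ c0 * m :=
        mul_le_mul_of_nonneg_left (le_max_left _ _) hc0.le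
      have h3 : c0 * m = 1 / 2 := by
        rw [hc0def]; field_simp
      rw [h1]; rw [h3] at h2; linarith
  have hCmem : ∀ e ∈ C,
      (∀ i : Fin l, 0 < P.toLinearMap (P.root (s i)) e) ∧ P.toLinearMap (P.root θ) e < 1 := by
    intro e he; rwa [hC] at he
  -- positivity on C for positive roots
  have hposC : ∀ e ∈ C, ∀ (k : ι) (c : Fin l → ℕ),
      P.root k = ∑ j, (c j : ℝ) • P.root (s j) →
      0 < P.toLinearMap (P.root k) e ∧ P.toLinearMap (P.root k) e < 1 := by
    intro e he k c hc
    obtain ⟨h1, h2⟩ := hCmem e he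
    have hval : P.toLinearMap (P.root k) e = ∑ j, (c j : ℝ) * P.toLinearMap (P.root (s j)) e := by
      rw [hc, keyval]
    constructor
    · rw [hval]
      have hexists : ∃ j, c j ≠ 0 := by
        by_contra hno
        push_neg at hno
        have h0 : P.root k = 0 := by
          rw [hc]
          simp [hno]
        exact P.ne_zero k h0
      obtain ⟨j0, hj0⟩ := hexists
      refine Finset.sum_pos' (fun j _ => mul_nonneg (Nat.cast_nonneg _) (h1 j).le)
        ⟨j0, Finset.mem_univ _, mul_pos ?_ (h1 j0)⟩
      exact_mod_cast Nat.pos_of_ne_zero hj0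
    · obtain ⟨c', hc'⟩ := hhighest k
      have hval' : P.toLinearMap (P.root θ) e - P.toLinearMap (P.root k) e
          = ∑ j, (c' j : ℝ) * P.toLinearMap (P.root (s j)) e := by
        rw [← LinearMap.sub_apply, ← map_sub, hc', keyval]
      have hge : (0:ℝ) ≤ ∑ j, (c' j : ℝ) * P.toLinearMap (P.root (s j)) e :=
        Finset.sum_nonneg fun j _ => mul_nonneg (Nat.cast_nonneg _) (h1 j).le
      linarith
  -- regularity of points of C
  have hregC : ∀ e ∈ C, ∀ (k : ι) (z : ℤ), P.toLinearMap (P.root k) e ≠ (z : ℝ) := by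
    intro e he k z hz
    rcases hbase k with ⟨c, hc⟩ | ⟨c, hc⟩
    · obtain ⟨h1, h2⟩ := hposC e he k c hc
      rw [hz] at h1 h2
      have hz0 : (0:ℤ) < z := by exact_mod_cast h1
      have hz1 : (1:ℝ) ≤ (z : ℝ) := by exact_mod_cast hz0
      linarith
    · set k' := P.reflectionPerm k k with hk'def
      have hk' : P.root k' = - P.root k := by
        rw [hk'def, P.root_reflectionPerm, P.reflection_apply_self]
      have hc' : P.root k' = ∑ j, (c j : ℝ) • P.root (s j) := by
        rw [hk', hc, neg_neg]
      obtain ⟨h1, h2⟩ := hposC e he k' c hc'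
      have hval : P.toLinearMap (P.root k') e = - P.toLinearMap (P.root k) e := by
        rw [hk', map_neg]; rfl
      rw [hval, hz] at h1 h2
      have hz1 : z < 0 := by exact_mod_cast (by linarith : (z:ℝ) < 0)
      have hz2 : (-1 : ℤ) < z := by exact_mod_cast (by linarith : (-1:ℝ) < (z:ℝ))
      omega
  -- the Weyl group of the flip preserves PRv
  have hW : ∀ g ∈ Subgroup.closure (Set.range P.flip.reflection), ∀ μ ∈ PRv, g μ ∈ PRv := by
    have main : ∀ g ∈ Subgroup.closure (Set.range P.flip.reflection), ∀ μ ∈ PRv, g μ ∈ PRv ∧ g⁻¹ μ ∈ PRv := by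
      intro g hg
      induction hg using Subgroup.closure_induction with
      | mem x hx =>
        obtain ⟨i, rfl⟩ := hx
        have hrefl : ∀ ν ∈ PRv, P.flip.reflection i ν ∈ PRv := by
          intro ν hν
          rw [hPint] at hν ⊢
          intro j
          obtain ⟨zj, hzj⟩ := hν j
          obtain ⟨zi, hzi⟩ := hν i
          obtain ⟨zp, hzp⟩ := hpair j i
          refine ⟨zj - zi * zp, ?_⟩
          have hr : P.flip.reflection i ν = ν - (P.toLinearMap (P.root i) ν) • P.coroot i := rfl
          rw [hr, map_sub, map_smul, smul_eq_mul, hzj, hzi, hzp]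
          push_cast
          ring
        intro μ hμ
        exact ⟨hrefl μ hμ, by
          rw [show (P.flip.reflection i)⁻¹ = P.flip.reflection i from rfl]
          exact hrefl μ hμ⟩
      | one =>
        intro μ hμ
        exact ⟨by simpa using hμ, by simpa using hμ⟩
      | mul x y hx hy ihx ihy =>
        intro μ hμ
        constructor
        · exact (ihx _ (ihy μ hμ).1).1
        · rw [mul_inv_rev]
          exact (ihy _ (ihx μ hμ).2).2
      | inv x hx ihx =>
        intro μ hμ
        exact ⟨(ihx μ hμ).2, by rw [inv_inv]; exact (ihx μ hμ).1⟩
    exact fun g hg μ hμ => (main g hg μ hμ).1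
  have hWco : ∀ g ∈ Subgroup.closure (Set.range P.flip.reflection), ∀ i : ι,
      ∃ j, P.coroot j = g (P.coroot i) := by
    have main : ∀ g ∈ Subgroup.closure (Set.range P.flip.reflection), ∀ i : ι,
        (∃ j, P.coroot j = g (P.coroot i)) ∧ (∃ j, P.coroot j = g⁻¹ (P.coroot i)) := by
      intro g hg
      induction hg using Subgroup.closure_induction with
      | mem x hx =>
        obtain ⟨k, rfl⟩ := hx
        intro i
        exact ⟨⟨P.reflectionPerm k i, by rw [P.coroot_reflectionPerm]; rfl⟩,
          ⟨P.reflectionPerm k i, by rw [P.coroot_reflectionPerm]; rfl⟩⟩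
      | one =>
        intro i
        exact ⟨⟨i, rfl⟩, ⟨i, rfl⟩⟩
      | mul x y hx hy ihx ihy =>
        intro i
        constructor
        · obtain ⟨j, hj⟩ := (ihy i).1
          obtain ⟨k, hk⟩ := (ihx j).1
          exact ⟨k, by rw [hk, hj]; rfl⟩
        · obtain ⟨j, hj⟩ := (ihx i).2
          obtain ⟨k, hk⟩ := (ihy j).2
          exact ⟨k, by rw [mul_inv_rev, hk, hj]; rfl⟩
      | inv x hx ihx =>
        intro i
        exact ⟨(ihx i).2, by rw [inv_inv]; exact (ihx i).1⟩
    exact fun g hg i => (main g hg i).1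
  -- affine action and the stabilizer set
  set act : (((Fin l → ℝ) ≃ₗ[ℝ] (Fin l → ℝ)) × (Fin l → ℝ)) → (Fin l → ℝ) → (Fin l → ℝ) :=
    fun p y => p.1 y + p.2 with hact
  set Γ : Set (((Fin l → ℝ) ≃ₗ[ℝ] (Fin l → ℝ)) × (Fin l → ℝ)) :=
    {p | p.1 ∈ Subgroup.closure (Set.range P.flip.reflection) ∧ p.2 ∈ PRv ∧ act p '' C = C} with hΓ
  -- arithmetic helper
  have harith : ∀ a b : ℝ, (∀ n : ℕ, 0 < a + n * b) → 0 ≤ b := by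
    intro a b h
    by_contra hb
    push_neg at hb
    obtain ⟨n, hn⟩ := exists_nat_gt (a / (-b))
    have h1 := h n
    have h2 : a < (n:ℝ) * (-b) := by
      rwa [div_lt_iff₀ (by linarith : (0:ℝ) < -b)] at hn
    linarith
  -- uniqueness of the translation part
  have huniq : ∀ (g : (Fin l → ℝ) ≃ₗ[ℝ] (Fin l → ℝ)) (μ1 μ2 : Fin l → ℝ),
      ((fun y => g y + μ1) '' C = C) → ((fun y => g y + μ2) '' C = C) → μ1 = μ2 := by
    intro g μ1 μ2 h1 h2
    set δ : Fin l → ℝ := μ2 - μ1 with hδ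
    have hstep : ∀ e ∈ C, e + δ ∈ C := by
      intro e he
      rw [← h1] at he
      obtain ⟨y, hy, hye⟩ := he
      have hmem : g y + μ2 ∈ C := h2 ▸ Set.mem_image_of_mem _ hy
      have heq : e + δ = g y + μ2 := by rw [← hye, hδ]; dsimp only; abel
      rwa [heq]
    have hiter : ∀ n : ℕ, n0 + (n : ℝ) • δ ∈ C := by
      intro n
      induction n with
      | zero => simpa using he0C
      | succ p ih =>
        have h := hstep _ ih
        have heq : n0 + ((p:ℝ) + 1) • δ = (n0 + (p:ℝ) • δ) + δ := by
          rw [add_smul, one_smul]; abel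
        push_cast
        rw [heq]
        exact h
    have hb : ∀ j : Fin l, 0 ≤ P.toLinearMap (P.root (s j)) δ := by
      intro j
      apply harith (P.toLinearMap (P.root (s j)) n0)
      intro n
      have h := (hCmem _ (hiter n)).1 j
      rwa [heval] at h
    have hu : P.toLinearMap (P.root θ) δ ≤ 0 := by
      have h := harith (1 - P.toLinearMap (P.root θ) n0) (- P.toLinearMap (P.root θ) δ) ?_
      · linarith
      · intro n
        have h := (hCmem _ (hiter n)).2
        rw [heval] at h
        linarith
    have hbu : ∀ j : Fin l, P.toLinearMap (P.root (s j)) δ ≤ P.toLinearMap (P.root θ) δ := by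
      intro j
      obtain ⟨c', hc'⟩ := hhighest (s j)
      have hval : P.toLinearMap (P.root θ) δ - P.toLinearMap (P.root (s j)) δ
          = ∑ q, (c' q : ℝ) * P.toLinearMap (P.root (s q)) δ := by
        rw [← LinearMap.sub_apply, ← map_sub, hc', keyval]
      have hge : (0:ℝ) ≤ ∑ q, (c' q : ℝ) * P.toLinearMap (P.root (s q)) δ :=
        Finset.sum_nonneg fun q _ => mul_nonneg (Nat.cast_nonneg _) (hb q)
      linarith
    have hzero : ∀ j, P.toLinearMap (P.root (s j)) δ = 0 :=
      fun j => le_antisymm ((hbu j).trans hu) (hb j)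
    have hδ0 : δ = 0 := hker δ hzero
    rw [hδ] at hδ0
    exact (sub_eq_zero.mp hδ0).symm
  -- Γ is finite
  have hΓfin : Γ.Finite := by
    have hinj : Function.Injective
        (fun p : ↥Γ => fun i : ι =>
          (hWco _ p.2.1 i).choose) := by
      intro p q hpq
      have hco : ∀ i : ι, p.1.1 (P.coroot i) = q.1.1 (P.coroot i) := by
        intro i
        have h' : (hWco _ p.2.1 i).choose
            = (hWco _ q.2.1 i).choose := congrFun hpq i
        have hpi : P.coroot ((hWco _ p.2.1 i).choose)
            = p.1.1 (P.coroot i) :=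
          (hWco _ p.2.1 i).choose_spec
        have hqi : P.coroot ((hWco _ q.2.1 i).choose)
            = q.1.1 (P.coroot i) :=
          (hWco _ q.2.1 i).choose_spec
        rw [← hpi, ← hqi, h']
      have hg : p.1.1 = q.1.1 := by
        apply LinearEquiv.toLinearMap_injective
        apply LinearMap.ext_on hcorootSpan
        rintro - ⟨i, rfl⟩
        exact hco i
      have hμ : p.1.2 = q.1.2 := by
        apply huniq p.1.1
        · exact p.2.2.2
        · rw [hg]; exact q.2.2.2
      exact Subtype.ext (Prod.ext hg hμ)
    have : Finite ↥Γ := Finite.of_injective _ hinj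
    exact Set.toFinite Γ
  -- Γ contains the identity and is closed under the affine group operations
  have hone : ((1 : (Fin l → ℝ) ≃ₗ[ℝ] (Fin l → ℝ)), (0 : Fin l → ℝ)) ∈ Γ := by
    refine ⟨one_mem _, PRv.zero_mem, ?_⟩
    have : act (1, (0 : Fin l → ℝ)) = id := by funext y; simp [hact]
    rw [this, Set.image_id]
  have hmulΓ : ∀ p ∈ Γ, ∀ q ∈ Γ, (p.1 * q.1, p.1 q.2 + p.2) ∈ Γ := by
    intro p hp q hq
    refine ⟨mul_mem hp.1 hq.1, PRv.add_mem (hW p.1 hp.1 q.2 hq.2.1) hp.2.1, ?_⟩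
    have hcomp : act (p.1 * q.1, p.1 q.2 + p.2) = act p ∘ act q := by
      funext y
      show (p.1 * q.1) y + (p.1 q.2 + p.2) = p.1 (q.1 y + q.2) + p.2
      rw [map_add, show (p.1 * q.1) y = p.1 (q.1 y) from rfl]
      abel
    rw [hcomp, Set.image_comp, hq.2.2, hp.2.2]
  have hinvΓ : ∀ p ∈ Γ, ((p.1⁻¹ : _), -(p.1⁻¹ p.2)) ∈ Γ := by
    intro p hp
    refine ⟨inv_mem hp.1, PRv.neg_mem (hW p.1⁻¹ (inv_mem hp.1) p.2 hp.2.1), ?_⟩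
    have hcomp : act ((p.1⁻¹ : _), -(p.1⁻¹ p.2)) ∘ act p = id := by
      funext y
      show p.1⁻¹ (p.1 y + p.2) + -(p.1⁻¹ p.2) = y
      rw [map_add, show p.1⁻¹ (p.1 y) = y from p.1.symm_apply_apply y]
      abel
    calc act ((p.1⁻¹ : _), -(p.1⁻¹ p.2)) '' C
        = act ((p.1⁻¹ : _), -(p.1⁻¹ p.2)) '' (act p '' C) := by rw [hp.2.2]
      _ = (act ((p.1⁻¹ : _), -(p.1⁻¹ p.2)) ∘ act p) '' C := (Set.image_comp _ _ _).symm
      _ = C := by rw [hcomp, Set.image_id]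
  -- the averaged point
  set Γf := hΓfin.toFinset with hΓf
  have h1Γf : ((1 : (Fin l → ℝ) ≃ₗ[ℝ] (Fin l → ℝ)), (0 : Fin l → ℝ)) ∈ Γf :=
    hΓfin.mem_toFinset.mpr hone
  have hΓfne : Γf.Nonempty := ⟨_, h1Γf⟩
  have hk0 : 0 < Γf.card := Finset.card_pos.mpr hΓfne
  have hkR : (0:ℝ) < (Γf.card : ℝ) := by exact_mod_cast hk0
  set nstar : Fin l → ℝ := ((Γf.card : ℝ))⁻¹ • ∑ p ∈ Γf, act p n0 with hnstar
  have hmemC : ∀ p ∈ Γf, act p n0 ∈ C := by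
    intro p hp
    have hp' := (hΓfin.mem_toFinset.mp hp).2.2
    rw [← hp']
    exact Set.mem_image_of_mem _ he0C
  have hvalC : ∀ k : ι, P.toLinearMap (P.root k) nstar
      = ((Γf.card : ℝ))⁻¹ * ∑ p ∈ Γf, P.toLinearMap (P.root k) (act p n0) := by
    intro k
    rw [hnstar, map_smul, map_sum, smul_eq_mul]
  have hnstarC : nstar ∈ C := by
    rw [hC]
    constructor
    · intro i
      rw [hvalC]
      exact mul_pos (inv_pos.mpr hkR)
        (Finset.sum_pos (fun p hp => (hCmem _ (hmemC p hp)).1 i) hΓfne)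
    · rw [hvalC]
      have hlt : ∑ p ∈ Γf, P.toLinearMap (P.root θ) (act p n0) < ∑ _p ∈ Γf, (1:ℝ) :=
        Finset.sum_lt_sum_of_nonempty hΓfne (fun p hp => (hCmem _ (hmemC p hp)).2)
      rw [Finset.sum_const, nsmul_eq_mul, mul_one] at hlt
      calc ((Γf.card : ℝ))⁻¹ * ∑ p ∈ Γf, P.toLinearMap (P.root θ) (act p n0)
          < ((Γf.card : ℝ))⁻¹ * (Γf.card : ℝ) :=
            mul_lt_mul_of_pos_left hlt (inv_pos.mpr hkR)
        _ = 1 := inv_mul_cancel₀ hkR.ne'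
  -- nstar is fixed by all of Γ
  have hfix : ∀ q ∈ Γ, q.1 nstar + q.2 = nstar := by
    intro q hq
    have hbij : ∑ p ∈ Γf, act p n0 = ∑ p ∈ Γf, act (q.1 * p.1, q.1 p.2 + q.2) n0 := by
      refine Finset.sum_bij' (i := fun p _ => ((q.1⁻¹ * p.1 : _), q.1⁻¹ p.2 + -(q.1⁻¹ q.2)))
        (j := fun p _ => (q.1 * p.1, q.1 p.2 + q.2)) ?_ ?_ ?_ ?_ ?_
      · intro p hp
        rw [hΓfin.mem_toFinset] at hp ⊢
        have := hmulΓ _ (hinvΓ q hq) p hp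
        simpa [map_add] using this
      · intro p hp
        rw [hΓfin.mem_toFinset] at hp ⊢
        exact hmulΓ q hq p hp
      · intro p hp
        have h1 : q.1 * (q.1⁻¹ * p.1) = p.1 := by
          rw [← mul_assoc, mul_inv_cancel, one_mul]
        have h2 : q.1 (q.1⁻¹ p.2 + -(q.1⁻¹ q.2)) + q.2 = p.2 := by
          rw [map_add, map_neg,
            show q.1 (q.1⁻¹ p.2) = p.2 from q.1.apply_symm_apply p.2,
            show q.1 (q.1⁻¹ q.2) = q.2 from q.1.apply_symm_apply q.2]
          abel
        show (q.1 * (q.1⁻¹ * p.1), q.1 (q.1⁻¹ p.2 + -(q.1⁻¹ q.2)) + q.2) = p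
        rw [h1, h2]
      · intro p hp
        have h1 : q.1⁻¹ * (q.1 * p.1) = p.1 := by
          rw [← mul_assoc, inv_mul_cancel, one_mul]
        have h2 : q.1⁻¹ (q.1 p.2 + q.2) + -(q.1⁻¹ q.2) = p.2 := by
          rw [map_add, show q.1⁻¹ (q.1 p.2) = p.2 from q.1.symm_apply_apply p.2]
          abel
        show (q.1⁻¹ * (q.1 * p.1), q.1⁻¹ (q.1 p.2 + q.2) + -(q.1⁻¹ q.2)) = p
        rw [h1, h2]
      · intro p hp
        have h1 : q.1 * (q.1⁻¹ * p.1) = p.1 := by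
          rw [← mul_assoc, mul_inv_cancel, one_mul]
        have h2 : q.1 (q.1⁻¹ p.2 + -(q.1⁻¹ q.2)) + q.2 = p.2 := by
          rw [map_add, map_neg,
            show q.1 (q.1⁻¹ p.2) = p.2 from q.1.apply_symm_apply p.2,
            show q.1 (q.1⁻¹ q.2) = q.2 from q.1.apply_symm_apply q.2]
          abel
        show act p n0 = act (q.1 * (q.1⁻¹ * p.1), q.1 (q.1⁻¹ p.2 + -(q.1⁻¹ q.2)) + q.2) n0
        rw [h1, h2]
    have hterm : ∀ p, act (q.1 * p.1, q.1 p.2 + q.2) n0 = q.1 (act p n0) + q.2 := by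
      intro p
      show (q.1 * p.1) n0 + (q.1 p.2 + q.2) = q.1 (p.1 n0 + p.2) + q.2
      rw [map_add, show (q.1 * p.1) n0 = q.1 (p.1 n0) from rfl]
      abel
    have hsum : ∑ p ∈ Γf, act p n0
        = (∑ p ∈ Γf, q.1 (act p n0)) + (Γf.card : ℝ) • q.2 := by
      rw [hbij, Finset.sum_congr rfl (fun p _ => hterm p), Finset.sum_add_distrib,
        Finset.sum_const, ← Nat.cast_smul_eq_nsmul ℝ]
    calc q.1 nstar + q.2
        = ((Γf.card : ℝ))⁻¹ • (∑ p ∈ Γf, q.1 (act p n0)) + q.2 := by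
          rw [hnstar, map_smul, map_sum]
      _ = ((Γf.card : ℝ))⁻¹ • ((∑ p ∈ Γf, q.1 (act p n0)) + (Γf.card : ℝ) • q.2) := by
          rw [smul_add, smul_smul, inv_mul_cancel₀ hkR.ne', one_smul]
      _ = nstar := by rw [hnstar, hsum]
  -- conclusion
  refine ⟨nstar, fun i z => hregC nstar hnstarC i z, ?_⟩
  intro T g μ hg hμ hT hTC
  have hΓq : (g, μ) ∈ Γ := by
    refine ⟨hg, hμ, ?_⟩
    have hTeq : act (g, μ) = ⇑T := by funext y; exact (hT y).symm
    rw [hTeq]; exact hTC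
  have hfx := hfix (g, μ) hΓq
  have h0 : (nstar - μ) - g nstar = 0 := by
    change g nstar + μ = nstar at hfx
    calc (nstar - μ) - g nstar = (g nstar + μ - μ) - g nstar := by rw [hfx]
      _ = 0 := by abel
  rw [h0]
  exact QRv.zero_mem
end
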